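/- For any positive integer p and nonnegative integers m, n, the product z_p^m ⋆̄ z_p^n equals the sum over i from 0 to min(m,n) of (-1)^i binom(m+n-2i, m-i) times the sum of all words containing z_p exactly (m+n-2i) times and z_{2p} exactly i times. -/

import Mathlib

open MonoidAlgebra Finset

abbrev H : Type := MonoidAlgebra ℚ (FreeMonoid ℕ+)

noncomputable def word (w : List ℕ+) : H := MonoidAlgebra.single (FreeMonoid.ofList w) 1

noncomputable def z (k : ℕ+) : H := word [k]

noncomputable def st : List ℕ+ → List ℕ+ → H
  | [], w => word w
  | k :: w1, [] => word (k :: w1)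
  | k :: w1, l :: w2 =>
      z k * st w1 (l :: w2) + z l * st (k :: w1) w2 + z (k + l) * st w1 w2
termination_by a b => a.length + b.length
decreasing_by all_goals (simp; try omega)
noncomputable def stbar : List ℕ+ → List ℕ+ → H
  | [], w => word w
  | k :: w1, [] => word (k :: w1)
  | k :: w1, l :: w2 =>
      z k * stbar w1 (l :: w2) + z l * stbar (k :: w1) w2 - z (k + l) * stbar w1 w2
termination_by a b => a.length + b.length
decreasing_by all_goals (simp; try omega)


lemma word_cons (x : ℕ+) (l : List ℕ+) : word (x :: l) = z x * word l := by
  simp only [word, z, MonoidAlgebra.single_mul_single, one_mul]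
  congr 1

noncomputable def W (p : ℕ+) (L i : ℕ) : H :=
  ∑ S ∈ Finset.powersetCard i (Finset.univ : Finset (Fin L)),
    word (List.ofFn fun j => if j ∈ S then 2 * p else p)

lemma W_eq_zero (p : ℕ+) {L i : ℕ} (h : L < i) : W p L i = 0 := by
  rw [W, Finset.powersetCard_eq_empty.2 (by simpa using h), Finset.sum_empty]

lemma W_zero (p : ℕ+) (L : ℕ) : W p L 0 = word (List.replicate L p) := by
  rw [W, Finset.powersetCard_zero, Finset.sum_singleton]
  simp

lemma W_succ_zero (p : ℕ+) (L : ℕ) : W p (L+1) 0 = z p * W p L 0 := by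
  rw [W_zero, W_zero, List.replicate_succ, word_cons]

lemma W_succ (p : ℕ+) (L i : ℕ) :
    W p (L+1) (i+1) = z p * W p L (i+1) + z (2*p) * W p L i := by
  classical
  set e : Fin L ↪ Fin (L+1) := ⟨Fin.succ, Fin.succ_injective L⟩ with he
  have huniv : (Finset.univ : Finset (Fin (L+1))) = insert 0 (Finset.map e Finset.univ) := by
    rw [Fin.univ_succ, Finset.cons_eq_insert]
  have h0 : (0 : Fin (L+1)) ∉ Finset.map e (Finset.univ : Finset (Fin L)) := by
    simp [he, Fin.succ_ne_zero]
  have hdisj : Disjoint (Finset.powersetCard (i+1) (Finset.map e Finset.univ))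
      (Finset.image (insert 0) (Finset.powersetCard i (Finset.map e Finset.univ))) := by
    rw [Finset.disjoint_left]
    intro S hS hS'
    rw [Finset.mem_powersetCard] at hS
    rw [Finset.mem_image] at hS'
    obtain ⟨T, _, rfl⟩ := hS'
    exact h0 (hS.1 (Finset.mem_insert_self 0 T))
  rw [W, huniv, Finset.powersetCard_succ_insert h0, Finset.sum_union hdisj]
  congr 1
  · rw [Finset.powersetCard_map, Finset.sum_map, W, Finset.mul_sum]
    refine Finset.sum_congr rfl fun T hT => ?_
    rw [show (Finset.mapEmbedding e).toEmbedding T = T.map e from Finset.mapEmbedding_apply, List.ofFn_succ, word_cons]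
    have h00 : (0 : Fin (L+1)) ∉ Finset.map e T := by
      simp [he, Fin.succ_ne_zero]
    rw [if_neg h00]
    refine congrArg (z p * ·) (congrArg word (congrArg List.ofFn (funext fun j => ?_)))
    exact if_congr (Finset.mem_map' e) rfl rfl
  · rw [Finset.sum_image, Finset.powersetCard_map, Finset.sum_map, W, Finset.mul_sum]
    · refine Finset.sum_congr rfl fun T hT => ?_
      rw [show (Finset.mapEmbedding e).toEmbedding T = T.map e from Finset.mapEmbedding_apply, List.ofFn_succ, word_cons]
      have h1 : ∀ j : Fin L, (e j : Fin (L+1)) ∈ insert 0 (Finset.map e T) ↔ j ∈ T := by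
        intro j
        rw [Finset.mem_insert, Finset.mem_map' e]
        simp [he, Fin.succ_ne_zero]
      rw [if_pos (Finset.mem_insert_self 0 _)]
      refine congrArg (z (2*p) * ·) (congrArg word (congrArg List.ofFn (funext fun j => ?_)))
      exact if_congr (h1 j) rfl rfl
    · intro X hX Y hY hXY
      rw [Finset.mem_coe, Finset.mem_powersetCard] at hX hY
      have hx0 : (0 : Fin (L+1)) ∉ X := fun h => h0 (hX.1 h)
      have hy0 : (0 : Fin (L+1)) ∉ Y := fun h => h0 (hY.1 h)
      have := congrArg (Finset.erase · 0) hXY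
      simpa [Finset.erase_insert, hx0, hy0] using this

def cc (a b i : ℕ) : ℚ := (-1 : ℚ) ^ i * ((a + b - 2 * i).choose (a - i) : ℚ)

noncomputable def f (p : ℕ+) (m n : ℕ) : H :=
  ∑ i ∈ Finset.range (min m n + 1), cc m n i • W p (m + n - i) i

lemma cc_pascal {m n i : ℕ} (him : i ≤ m) (hin : i ≤ n) :
    cc (m+1) (n+1) i = cc m (n+1) i + cc (m+1) n i := by
  have e1 : m+1+(n+1)-2*i = (m+n+1-2*i)+1 := by omega
  have e2 : m+1-i = (m-i)+1 := by omega
  have e3 : m+(n+1)-2*i = m+n+1-2*i := by omega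
  have e4 : m+1+n-2*i = m+n+1-2*i := by omega
  simp only [cc, e1, e2, e3, e4, Nat.choose_succ_succ]
  push_cast
  ring

lemma cc_left {m n i : ℕ} (h : m+1 ≤ i) : cc (m+1) (n+1) i = cc (m+1) n i := by
  simp only [cc, show m+1-i = 0 from by omega, Nat.choose_zero_right]

lemma cc_right {m n i : ℕ} (h : i = n+1) (hm : n+1 ≤ m) :
    cc (m+1) (n+1) i = cc m (n+1) i := by
  subst h
  simp only [cc, show m+1+(n+1)-2*(n+1) = m-n from by omega,
    show m+1-(n+1) = m-n from by omega,
    show m+(n+1)-2*(n+1) = m-n-1 from by omega,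
    show m-(n+1) = m-n-1 from by omega, Nat.choose_self]

lemma cc_neg (m n j : ℕ) : cc (m+1) (n+1) (j+1) = - cc m n j := by
  simp only [cc, show m+1+(n+1)-2*(j+1) = m+n-2*j from by omega,
    show m+1-(j+1) = m-j from by omega, pow_succ]
  ring

lemma key1 (p : ℕ+) (m n : ℕ) :
    ∑ i ∈ Finset.range (min m n + 2), cc (m+1) (n+1) i • (z p * W p (m+n+1-i) i)
      = z p * f p m (n+1) + z p * f p (m+1) n := by
  simp only [f, Finset.mul_sum, mul_smul_comm]
  have hrw : m+1+n = m+n+1 := by omega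
  rw [hrw, show m + (n+1) = m+n+1 from rfl]
  have h1 : ∑ i ∈ Finset.range (min m (n+1) + 1), cc m (n+1) i • (z p * W p (m+n+1-i) i)
      = ∑ i ∈ Finset.range (min m n + 2),
          (if i ≤ min m (n+1) then cc m (n+1) i • (z p * W p (m+n+1-i) i) else 0) := by
    refine (Finset.sum_congr rfl fun i hi => ?_).trans
      (Finset.sum_subset (Finset.range_subset_range.2 (by omega)) fun x _ hx => ?_)
    · rw [if_pos (by simp only [Finset.mem_range] at hi; omega)]
    · rw [if_neg (by simp only [Finset.mem_range] at hx ⊢; omega)]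
  have h2 : ∑ i ∈ Finset.range (min (m+1) n + 1), cc (m+1) n i • (z p * W p (m+n+1-i) i)
      = ∑ i ∈ Finset.range (min m n + 2),
          (if i ≤ min (m+1) n then cc (m+1) n i • (z p * W p (m+n+1-i) i) else 0) := by
    refine (Finset.sum_congr rfl fun i hi => ?_).trans
      (Finset.sum_subset (Finset.range_subset_range.2 (by omega)) fun x _ hx => ?_)
    · rw [if_pos (by simp only [Finset.mem_range] at hi; omega)]
    · rw [if_neg (by simp only [Finset.mem_range] at hx ⊢; omega)]
  rw [h1, h2, ← Finset.sum_add_distrib]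
  refine Finset.sum_congr rfl fun i hi => ?_
  simp only [Finset.mem_range] at hi
  by_cases hc1 : i ≤ min m (n+1) <;> by_cases hc2 : i ≤ min (m+1) n
  · rw [if_pos hc1, if_pos hc2, cc_pascal (by omega) (by omega), add_smul]
  · rw [if_pos hc1, if_neg hc2, add_zero, cc_right (by omega) (by omega)]
  · rw [if_neg hc1, if_pos hc2, zero_add, cc_left (by omega)]
  · rw [if_neg hc1, if_neg hc2, add_zero, W_eq_zero p (show m+n+1-i < i by omega),
      mul_zero, smul_zero]

lemma key2 (p : ℕ+) (m n : ℕ) :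
    ∑ j ∈ Finset.range (min m n + 1), cc (m+1) (n+1) (j+1) • (z (2*p) * W p (m+n-j) j)
      = -(z (2*p) * f p m n) := by
  simp only [f, Finset.mul_sum, mul_smul_comm, ← Finset.sum_neg_distrib]
  refine Finset.sum_congr rfl fun j hj => ?_
  rw [cc_neg, neg_smul]

lemma f_rec (p : ℕ+) (m n : ℕ) :
    f p (m+1) (n+1) = z p * f p m (n+1) + z p * f p (m+1) n - z (2*p) * f p m n := by
  have step1 : f p (m+1) (n+1)
      = ∑ i ∈ Finset.range (min m n + 2), cc (m+1) (n+1) i • W p (m+n+2-i) i := by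
    simp only [f]
    rw [show min (m+1) (n+1) + 1 = min m n + 2 from by omega,
      show m+1+(n+1) = m+n+2 from by omega]
  rw [step1,
    Finset.sum_range_succ' (fun i => cc (m+1) (n+1) i • W p (m+n+2-i) i) (min m n + 1)]
  have step2 : ∑ j ∈ Finset.range (min m n + 1), cc (m+1) (n+1) (j+1) • W p (m+n+2-(j+1)) (j+1)
      = ∑ j ∈ Finset.range (min m n + 1), (cc (m+1) (n+1) (j+1) • (z p * W p (m+n-j) (j+1))
         + cc (m+1) (n+1) (j+1) • (z (2*p) * W p (m+n-j) j)) := by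
    refine Finset.sum_congr rfl fun j hj => ?_
    simp only [Finset.mem_range] at hj
    rw [show m+n+2-(j+1) = (m+n-j)+1 from by omega, W_succ, smul_add]
  rw [step2, Finset.sum_add_distrib, show m+n+2-0 = (m+n+1)+1 from by omega, W_succ_zero,
    key2]
  have step3 : (∑ j ∈ Finset.range (min m n + 1),
        cc (m+1) (n+1) (j+1) • (z p * W p (m+n-j) (j+1)))
      + cc (m+1) (n+1) 0 • (z p * W p (m+n+1) 0)
      = ∑ i ∈ Finset.range (min m n + 2), cc (m+1) (n+1) i • (z p * W p (m+n+1-i) i) := by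
    rw [Finset.sum_range_succ' (fun i => cc (m+1) (n+1) i • (z p * W p (m+n+1-i) i))
      (min m n + 1)]
    rw [Nat.sub_zero]
    refine congrArg (· + _) ?_
    refine Finset.sum_congr rfl fun j hj => ?_
    rw [show m+n+1-(j+1) = m+n-j from by omega]
  rw [add_right_comm, step3, key1, sub_eq_add_neg]

lemma f_zero_left (p : ℕ+) (n : ℕ) : f p 0 n = word (List.replicate n p) := by
  simp only [f, Nat.zero_min, zero_add, Finset.sum_range_one, cc, pow_zero,
    Nat.sub_zero, Nat.choose_zero_right, Nat.cast_one, mul_one, one_smul, Nat.mul_zero, W_zero]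

lemma f_zero_right (p : ℕ+) (m : ℕ) : f p m 0 = word (List.replicate m p) := by
  simp only [f, Nat.min_zero, zero_add, Finset.sum_range_one, cc, pow_zero, Nat.sub_zero,
    Nat.add_zero, Nat.mul_zero, Nat.choose_self, Nat.cast_one, mul_one, one_smul, W_zero]

lemma stbar_nil_right (w : List ℕ+) : stbar w [] = word w := by
  cases w <;> rw [stbar]

lemma main_lemma (p : ℕ+) (m n : ℕ) :
    stbar (List.replicate m p) (List.replicate n p) = f p m n := by
  induction m generalizing n with
  | zero => rw [List.replicate_zero, stbar, f_zero_left]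
  | succ m ihm =>
    induction n with
    | zero => rw [List.replicate_zero, stbar_nil_right, f_zero_right]
    | succ n ihn =>
      rw [List.replicate_succ, List.replicate_succ (a := p) (n := n), stbar, ← List.replicate_succ,
        ← List.replicate_succ, ihm (n+1), ihn, ihm n, f_rec,
        show p + p = 2 * p from by { apply PNat.coe_injective; push_cast; ring }]

theorem stbar_pow_pow (p : ℕ+) (m n : ℕ) :
    stbar (List.replicate m p) (List.replicate n p) =
      ∑ i ∈ Finset.range (min m n + 1),
        ((-1 : ℚ) ^ i * (Nat.choose (m + n - 2 * i) (m - i) : ℚ)) •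
          ∑ S ∈ Finset.powersetCard i (Finset.univ : Finset (Fin (m + n - 2 * i + i))),
            word (List.ofFn fun j => if j ∈ S then 2 * p else p) := by
  rw [main_lemma]
  simp only [f, cc]
  refine Finset.sum_congr rfl fun i hi => ?_
  simp only [Finset.mem_range] at hi
  rw [show m + n - i = m + n - 2 * i + i from by omega]
  rfl
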